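/- Let G be a group and let S be a submonoid of G that generates G as a group. If S satisfies the right Følner condition, then G satisfies the right Følner condition: for every nonempty finite subset K ⊆ G and every ε > 0 there exists a nonempty finite subset F ⊆ G with |F·g ∖ F| ≤ ε·|F| for every g ∈ K. -/

import Mathlib

/-- A semigroup satisfies the right Følner condition if for every nonempty finite
`K` and every `ε > 0` there is a nonempty finite `F` with `|F·k ∖ F| ≤ ε·|F|`
for every `k ∈ K`. -/
def RightFolnerCond (S : Type*) [Mul S] [DecidableEq S] : Prop :=
  ∀ K : Finset S, K.Nonempty → ∀ ε : ℝ, 0 < ε →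
    ∃ F : Finset S, F.Nonempty ∧ ∀ k ∈ K, (((F.image (· * k)) \ F).card : ℝ) ≤ ε * F.card

section Aux

variable {G : Type*} [Group G] [DecidableEq G]

private lemma aux_img_sdiff (A : Finset G) (g h : G) :
    (A.image (· * g) \ A).image (· * h) = A.image (· * (g * h)) \ A.image (· * h) := by
  rw [Finset.image_sdiff _ _ (mul_left_injective h)]
  congr 1
  · rw [Finset.image_image]; congr 1; ext x; simp [mul_assoc]

/-- cardinality of `A·g⁻¹ \ A` equals that of `A·g \ A`. -/
private lemma aux_inv_card (A : Finset G) (g : G) :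
    ((A.image (· * g⁻¹)) \ A).card = ((A.image (· * g)) \ A).card := by
  have h1 : ((A.image (· * g⁻¹) \ A).image (· * g)).card
      = (A \ A.image (· * g)).card := by
    rw [aux_img_sdiff]
    congr 2
    rw [inv_mul_cancel]
    ext x; simp
  rw [Finset.card_image_of_injective _ (mul_left_injective g)] at h1
  rw [h1]
  exact Finset.card_sdiff_comm (by
    rw [Finset.card_image_of_injective _ (mul_left_injective g)])

/-- telescoping bound. -/
private lemma aux_tele (A : Finset G) (g h : G) :
    ((A.image (· * (g * h))) \ A).card ≤
      ((A.image (· * g)) \ A).card + ((A.image (· * h)) \ A).card := by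
  have hsub : (A.image (· * (g * h))) \ A ⊆
      ((A.image (· * (g * h))) \ A.image (· * h)) ∪ ((A.image (· * h)) \ A) := by
    intro x hx
    simp only [Finset.mem_sdiff, Finset.mem_union] at hx ⊢
    by_cases hxh : x ∈ A.image (· * h)
    · exact Or.inr ⟨hxh, hx.2⟩
    · exact Or.inl ⟨hx.1, hxh⟩
  calc ((A.image (· * (g * h))) \ A).card
      ≤ (((A.image (· * (g * h))) \ A.image (· * h)) ∪ ((A.image (· * h)) \ A)).card :=
        Finset.card_le_card hsub
    _ ≤ ((A.image (· * (g * h))) \ A.image (· * h)).card + ((A.image (· * h)) \ A).card :=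
        Finset.card_union_le _ _
    _ = ((A.image (· * g)) \ A).card + ((A.image (· * h)) \ A).card := by
        rw [← aux_img_sdiff, Finset.card_image_of_injective _ (mul_left_injective h)]

end Aux

/-- if a submonoid `S` generating a group `G` satisfies the right
Følner condition, then so does `G`. -/
theorem stmt4 {G : Type*} [Group G] [DecidableEq G] (S : Submonoid G)
    (hgen : Subgroup.closure (S : Set G) = ⊤)
    (hS : RightFolnerCond ↥S) :
    RightFolnerCond G := by
  classical
  intro K hK ε hε
  -- every element of G is a product of letters from S ∪ S⁻¹
  have hword : ∀ g : G, ∃ w : List G,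
      (∀ a ∈ w, a ∈ S ∨ a⁻¹ ∈ S) ∧ w.prod = g := by
    intro g
    have hg : g ∈ Subgroup.closure (S : Set G) := by rw [hgen]; trivial
    induction hg using Subgroup.closure_induction with
    | mem a ha => exact ⟨[a], by simpa using Or.inl ha, by simp⟩
    | one => exact ⟨[], by simp, by simp⟩
    | mul a b _ _ iha ihb =>
        obtain ⟨w1, h1, p1⟩ := iha
        obtain ⟨w2, h2, p2⟩ := ihb
        exact ⟨w1 ++ w2, by
          intro a ha
          rcases List.mem_append.1 ha with h | h
          exacts [h1 _ h, h2 _ h], by simp [p1, p2]⟩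
    | inv a _ ih =>
        obtain ⟨w, h1, p1⟩ := ih
        refine ⟨(w.map (·⁻¹)).reverse, ?_, ?_⟩
        · intro b hb
          simp only [List.mem_reverse, List.mem_map] at hb
          obtain ⟨c, hc, rfl⟩ := hb
          rcases h1 c hc with h | h
          · right; simpa using h
          · left; exact h
        · rw [← List.prod_inv_reverse, p1]
  choose word hw1 hw2 using hword
  -- choice of a witness in S for a letter
  set c : G → ↥S := fun a =>
    if h : a ∈ S then ⟨a, h⟩ else if h' : a⁻¹ ∈ S then ⟨a⁻¹, h'⟩ else 1 with hc
  set L : Finset G := K.biUnion fun k => (word k).toFinset with hL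
  set T : Finset ↥S := insert 1 (L.image c) with hT
  set N : ℕ := K.sup (fun k => (word k).length) + 1 with hN
  have hNpos : (0 : ℝ) < N := by positivity
  set ε' : ℝ := ε / N with hε'
  have hε'pos : 0 < ε' := by positivity
  obtain ⟨F₀, hF₀ne, hF₀⟩ := hS T ⟨1, Finset.mem_insert_self _ _⟩ ε' hε'pos
  set F : Finset G := F₀.image Subtype.val with hF
  have hFcard : F.card = F₀.card :=
    Finset.card_image_of_injective _ Subtype.val_injective
  have hFne : F.Nonempty := hF₀ne.image _
  refine ⟨F, hFne, ?_⟩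
  -- transfer of the Følner bound from S to G
  have htrans : ∀ t : ↥S, ((F.image (· * (t : G))) \ F).card
      = ((F₀.image (· * t)) \ F₀).card := by
    intro t
    have himg : F.image (· * (t : G)) = (F₀.image (· * t)).image Subtype.val := by
      rw [hF, Finset.image_image, Finset.image_image]
      rfl
    rw [himg, hF, ← Finset.image_sdiff _ _ Subtype.val_injective,
      Finset.card_image_of_injective _ Subtype.val_injective]
  -- per-letter bound
  have hlet : ∀ a ∈ L, (((F.image (· * a)) \ F).card : ℝ) ≤ ε' * F.card := by
    intro a haL
    have hcaT : c a ∈ T := Finset.mem_insert_of_mem (Finset.mem_image_of_mem _ haL)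
    have haS : a ∈ S ∨ a⁻¹ ∈ S := by
      rw [hL] at haL
      obtain ⟨k, hk, ha⟩ := Finset.mem_biUnion.1 haL
      exact hw1 k a (List.mem_toFinset.1 ha)
    by_cases h : a ∈ S
    · have hca : (c a : G) = a := by simp [hc, h]
      calc (((F.image (· * a)) \ F).card : ℝ)
          = ((F.image (· * (c a : G))) \ F).card := by rw [hca]
        _ = ((F₀.image (· * c a)) \ F₀).card := by rw [htrans]
        _ ≤ ε' * F₀.card := hF₀ _ hcaT
        _ = ε' * F.card := by rw [hFcard]
    · have h' : a⁻¹ ∈ S := haS.resolve_left h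
      have hca : (c a : G) = a⁻¹ := by simp [hc, h, h']
      have : ((F.image (· * a)) \ F).card = ((F.image (· * (c a : G))) \ F).card := by
        rw [hca, ← aux_inv_card F a⁻¹, inv_inv]
      calc (((F.image (· * a)) \ F).card : ℝ)
          = ((F.image (· * (c a : G))) \ F).card := by rw [this]
        _ = ((F₀.image (· * c a)) \ F₀).card := by rw [htrans]
        _ ≤ ε' * F₀.card := hF₀ _ hcaT
        _ = ε' * F.card := by rw [hFcard]
  -- main word estimate
  have hmain : ∀ w : List G,
      (∀ a ∈ w, (((F.image (· * a)) \ F).card : ℝ) ≤ ε' * F.card) →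
      (((F.image (· * w.prod)) \ F).card : ℝ) ≤ w.length * (ε' * F.card) := by
    intro w
    induction w with
    | nil =>
        intro _
        simp
    | cons a w ih =>
        intro hall
        have h1 := hall a List.mem_cons_self
        have h2 := ih fun b hb => hall b (List.mem_cons_of_mem _ hb)
        have htele := aux_tele F a w.prod
        calc (((F.image (· * (a :: w).prod)) \ F).card : ℝ)
            = ((F.image (· * (a * w.prod))) \ F).card := by rw [List.prod_cons]
          _ ≤ ((F.image (· * a)) \ F).card + ((F.image (· * w.prod)) \ F).card := by
              exact_mod_cast htele
          _ ≤ ε' * F.card + w.length * (ε' * F.card) := add_le_add h1 h2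
          _ = (a :: w).length * (ε' * F.card) := by
              simp [List.length_cons]; ring
  intro k hk
  have hlen : ((word k).length : ℝ) ≤ N := by
    have : (word k).length ≤ K.sup (fun k => (word k).length) := Finset.le_sup (f := fun k => (word k).length) hk
    exact_mod_cast this.trans (Nat.le_succ _)
  have hkw : (word k).prod = k := hw2 k
  have hmem : ∀ a ∈ word k, (((F.image (· * a)) \ F).card : ℝ) ≤ ε' * F.card := by
    intro a ha
    exact hlet a (Finset.mem_biUnion.2 ⟨k, hk, List.mem_toFinset.2 ha⟩)
  have hεcard : 0 ≤ ε' * F.card := by positivity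
  calc (((F.image (· * k)) \ F).card : ℝ)
      = ((F.image (· * (word k).prod)) \ F).card := by rw [hkw]
    _ ≤ (word k).length * (ε' * F.card) := hmain _ hmem
    _ ≤ N * (ε' * F.card) := by
        exact mul_le_mul_of_nonneg_right hlen hεcard
    _ = ε * F.card := by
        rw [hε']; field_simp
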